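/- Let H be a complex Hilbert space and T a bounded operator on H with ‖T‖ ≤ 1 such that (T*)ⁿ v → 0 as n → ∞ for every v ∈ H. Let D = (I − T T*)^{1/2} and let K be the closure of the range of D. If (g_i)_{i∈I} is a family of vectors of K such that A‖f‖² ≤ ∑_{i∈I} |⟨f, g_i⟩|² ≤ B‖f‖² for all f ∈ K (for some constants A, B > 0), then {Tⁿ (D g_i) : i ∈ I, n ≥ 0} is a frame of H with the same bounds A, B, i.e., A‖f‖² ≤ ∑_{i∈I, n≥0} |⟨f, Tⁿ D g_i⟩|² ≤ B‖f‖² for all f ∈ H. -/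

import Mathlib

open scoped ComplexInnerProductSpace

/-- Let `T` be a contraction with strongly stable adjoint,
`D = (I − T T*)^{1/2}` the defect operator and `K` the closure of the range of `D`
(the defect space). If `(gᵢ)` is a frame of `K` with bounds `A, B`, then
`{Tⁿ (D gᵢ)}` is a frame of `H` with the same bounds. -/
theorem frame_of_iterations_from_defect_frame
    (H : Type*) [NormedAddCommGroup H] [InnerProductSpace ℂ H] [CompleteSpace H]
    (T : H →L[ℂ] H) (hT : ‖T‖ ≤ 1)
    (hstable : ∀ v : H,
      Filter.Tendsto (fun n : ℕ => ((ContinuousLinearMap.adjoint T) ^ n) v)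
        Filter.atTop (nhds 0))
    (D : H →L[ℂ] H) (hDpos : D.IsPositive)
    (hD2 : D * D = 1 - T * ContinuousLinearMap.adjoint T)
    {ι : Type*} (g : ι → H)
    (hg : ∀ i, g i ∈ (LinearMap.range (D : H →ₗ[ℂ] H)).topologicalClosure)
    (A B : ℝ) (hA : 0 < A) (hB : 0 < B)
    (hframe : ∀ f ∈ (LinearMap.range (D : H →ₗ[ℂ] H)).topologicalClosure,
      A * ‖f‖ ^ 2 ≤ ∑' i : ι, ‖⟪f, g i⟫‖ ^ 2 ∧
      ∑' i : ι, ‖⟪f, g i⟫‖ ^ 2 ≤ B * ‖f‖ ^ 2) :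
    ∀ f : H,
      A * ‖f‖ ^ 2 ≤ ∑' p : ι × ℕ, ‖⟪f, (T ^ p.2) (D (g p.1))⟫‖ ^ 2 ∧
      ∑' p : ι × ℕ, ‖⟪f, (T ^ p.2) (D (g p.1))⟫‖ ^ 2 ≤ B * ‖f‖ ^ 2 := by
  intro f
  set S := ContinuousLinearMap.adjoint T with hS
  set K := (LinearMap.range (D : H →ₗ[ℂ] H)).topologicalClosure with hK
  have hDsa : ContinuousLinearMap.adjoint D = D := by
    rw [← ContinuousLinearMap.star_eq_adjoint]; exact hDpos.isSelfAdjoint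
  have hDmove : ∀ y z : H, (⟪y, D z⟫ : ℂ) = ⟪D y, z⟫ := fun y z => by
    rw [← ContinuousLinearMap.adjoint_inner_left, hDsa]
  -- key inner product identity
  have key : ∀ (n : ℕ) (x : H), (⟪f, (T ^ n) (D x)⟫ : ℂ) = ⟪D ((S ^ n) f), x⟫ := by
    intro n x
    calc (⟪f, (T ^ n) (D x)⟫ : ℂ) = ⟪ContinuousLinearMap.adjoint (T ^ n) f, D x⟫ :=
          (ContinuousLinearMap.adjoint_inner_left _ _ _).symm
      _ = ⟪(S ^ n) f, D x⟫ := by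
          rw [hS, ← ContinuousLinearMap.star_eq_adjoint, star_pow,
            ContinuousLinearMap.star_eq_adjoint]
      _ = ⟪D ((S ^ n) f), x⟫ := hDmove _ _
  -- norm identity
  have hnorm : ∀ x : H, ‖D x‖ ^ 2 = ‖x‖ ^ 2 - ‖S x‖ ^ 2 := by
    intro x
    have h1 : (⟪D x, D x⟫ : ℂ) = ⟪x, x⟫ - ⟪S x, S x⟫ := by
      calc (⟪D x, D x⟫ : ℂ) = ⟪x, D (D x)⟫ := (hDmove x (D x)).symm
        _ = ⟪x, (D * D) x⟫ := rfl
        _ = ⟪x, x⟫ - ⟪x, T (S x)⟫ := by rw [hD2]; simp [inner_sub_right]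
        _ = ⟪x, x⟫ - ⟪S x, S x⟫ := by rw [hS, ← ContinuousLinearMap.adjoint_inner_left]
    rw [inner_self_eq_norm_sq_to_K, inner_self_eq_norm_sq_to_K,
      inner_self_eq_norm_sq_to_K] at h1
    exact_mod_cast h1
  -- the telescoping sum
  set a : ℕ → ℝ := fun n => ‖(S ^ n) f‖ ^ 2 with ha
  set c : ℕ → ℝ := fun n => ‖D ((S ^ n) f)‖ ^ 2 with hcdef
  have hc : ∀ n, c n = a n - a (n + 1) := by
    intro n
    have : (S ^ (n + 1)) f = S ((S ^ n) f) := by rw [pow_succ']; rfl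
    simp only [hcdef, ha, this]
    exact hnorm _
  have hc0 : ∀ n, 0 ≤ c n := fun n => sq_nonneg _
  have hsum_c : HasSum c (‖f‖ ^ 2) := by
    rw [hasSum_iff_tendsto_nat_of_nonneg hc0]
    have heq : ∀ n, ∑ i ∈ Finset.range n, c i = a 0 - a n := by
      intro n
      calc ∑ i ∈ Finset.range n, c i = ∑ i ∈ Finset.range n, (a i - a (i + 1)) := by
            exact Finset.sum_congr rfl fun i _ => hc i
        _ = a 0 - a n := Finset.sum_range_sub' a n
    simp only [heq]
    have ha0 : a 0 = ‖f‖ ^ 2 := by simp [ha]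
    have htend : Filter.Tendsto a Filter.atTop (nhds 0) := by
      have := (hstable f).norm
      simp only [norm_zero] at this
      have h2 := this.pow 2
      simpa only [ne_eq, OfNat.ofNat_ne_zero, not_false_eq_true, zero_pow] using h2
    rw [← ha0]
    simpa using Filter.Tendsto.const_sub (a 0) htend
  -- membership and summability on K
  have hmemK : ∀ x : H, D x ∈ K := fun x =>
    (LinearMap.range (D : H →ₗ[ℂ] H)).le_topologicalClosure ⟨x, rfl⟩
  have hsumK : ∀ x ∈ K, Summable fun i : ι => ‖⟪x, g i⟫‖ ^ 2 := by
    intro x hx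
    by_cases h : Summable fun i : ι => ‖(⟪x, g i⟫ : ℂ)‖ ^ 2
    · exact h
    · exfalso
      have h0 := (hframe x hx).1
      rw [tsum_eq_zero_of_not_summable h] at h0
      have hx0 : x = 0 := by
        have : ‖x‖ ^ 2 ≤ 0 := by nlinarith [sq_nonneg ‖x‖]
        have : ‖x‖ = 0 := by nlinarith [sq_nonneg ‖x‖, norm_nonneg x]
        simpa using this
      apply h
      subst hx0
      simp only [inner_zero_left, norm_zero]
      simpa using summable_zero
  -- per-level bounds
  have hbound : ∀ n : ℕ,
      A * c n ≤ ∑' i : ι, ‖(⟪D ((S ^ n) f), g i⟫ : ℂ)‖ ^ 2 ∧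
      ∑' i : ι, ‖(⟪D ((S ^ n) f), g i⟫ : ℂ)‖ ^ 2 ≤ B * c n := fun n =>
    hframe (D ((S ^ n) f)) (hmemK _)
  -- summability of the double sum
  set G : ℕ × ι → ℝ := fun q => ‖(⟪f, (T ^ q.1) (D (g q.2))⟫ : ℂ)‖ ^ 2 with hGdef
  have hGeq : ∀ q : ℕ × ι, G q = ‖(⟪D ((S ^ q.1) f), g q.2⟫ : ℂ)‖ ^ 2 := fun q => by
    simp only [hGdef, key]
  set Sn : ℕ → ℝ := fun n => ∑' i : ι, ‖(⟪D ((S ^ n) f), g i⟫ : ℂ)‖ ^ 2 with hSndef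
  have hSn_nonneg : ∀ n, 0 ≤ Sn n := fun n => tsum_nonneg fun i => sq_nonneg _
  have hSn_summable : Summable Sn := by
    apply Summable.of_nonneg_of_le hSn_nonneg (fun n => (hbound n).2)
    exact hsum_c.summable.mul_left B
  have hG_fiber : ∀ n : ℕ, Summable fun i : ι => G (n, i) := by
    intro n
    have := hsumK (D ((S ^ n) f)) (hmemK _)
    refine this.congr fun i => ?_
    exact (hGeq (n, i)).symm
  have hG_summable : Summable G := by
    rw [summable_prod_of_nonneg (fun q => sq_nonneg _)]
    refine ⟨hG_fiber, ?_⟩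
    refine hSn_summable.congr fun n => ?_
    simp only [hSndef]
    exact tsum_congr fun i => (hGeq (n, i)).symm
  -- rewrite the tsum over ι × ℕ as a tsum over ℕ × ι
  have htsum_eq : (∑' p : ι × ℕ, ‖(⟪f, (T ^ p.2) (D (g p.1))⟫ : ℂ)‖ ^ 2) = ∑' n : ℕ, Sn n := by
    have e1 : (∑' q : ℕ × ι, G q) = ∑' p : ι × ℕ, ‖(⟪f, (T ^ p.2) (D (g p.1))⟫ : ℂ)‖ ^ 2 := by
      exact (Equiv.prodComm ℕ ι).tsum_eq fun p => ‖(⟪f, (T ^ p.2) (D (g p.1))⟫ : ℂ)‖ ^ 2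
    rw [← e1, Summable.tsum_prod' hG_summable hG_fiber]
    exact tsum_congr fun n => tsum_congr fun i => hGeq (n, i)
  rw [htsum_eq]
  constructor
  · have hAc : HasSum (fun n => A * c n) (A * ‖f‖ ^ 2) := hsum_c.mul_left A
    rw [← hAc.tsum_eq]
    exact Summable.tsum_le_tsum (fun n => (hbound n).1) hAc.summable hSn_summable
  · have hBc : HasSum (fun n => B * c n) (B * ‖f‖ ^ 2) := hsum_c.mul_left B
    rw [← hBc.tsum_eq]
    exact Summable.tsum_le_tsum (fun n => (hbound n).2) hSn_summable hBc.summable
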